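/- Let A = (Q, E, s, F) be a Wheeler r-GNFA, let ≤ be a Wheeler order on A, and let α ∈ Σ* with α ≠ ε. Let h* be defined as in the context. Then |G^≺_⊣(α)| ≥ h*. -/
import Mathlib


/-- Strict co-lexicographic order: `α ≺ β` iff `α.reverse` is lexicographically
smaller than `β.reverse`. The empty string is the minimum. -/
def ColexLt {σ : Type*} [LinearOrder σ] (α β : List σ) : Prop :=
  List.Lex (· < ·) α.reverse β.reverse

/-- Non-strict co-lexicographic order `α ≼ β`. -/
def ColexLe {σ : Type*} [LinearOrder σ] (α β : List σ) : Prop :=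
  ColexLt α β ∨ α = β

/-- `α` is a strict suffix of `β`. -/
def IsStrictSuffix {σ : Type*} (α β : List σ) : Prop :=
  α <:+ β ∧ α ≠ β

/-- `p(α, k)`: the prefix of `α` of length `k`. -/
def pref {σ : Type*} (α : List σ) (k : ℕ) : List σ := α.take k

/-- `s(α, k)`: the suffix of `α` of length `k`. -/
def suff {σ : Type*} (α : List σ) (k : ℕ) : List σ := α.drop (α.length - k)

/-- The 1-based rank of a state in a finite linear order: `rankQ u = i` means
`u = Q[i]` in the enumeration `Q[1] < Q[2] < ⋯ < Q[|Q|]`. -/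
noncomputable def rankQ {Q : Type*} [Fintype Q] [LinearOrder Q] (u : Q) : ℕ :=
  {v : Q | v ≤ u}.ncard

/-- `Q[i, j] = {Q[i], …, Q[j]}` (empty if `i > j`). -/
def Qiv (Q : Type*) [Fintype Q] [LinearOrder Q] (i j : ℕ) : Set Q :=
  {u | i ≤ rankQ u ∧ rankQ u ≤ j}

/-- A generalized nondeterministic finite automaton: a finite set of
string-labeled edges `E ⊆ Q × Q × Σ*`, an initial state `s`, final states `F`. -/
structure GNFA (σ Q : Type*) where
  E : Finset (Q × Q × List σ)
  s : Q
  F : Finset Q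

namespace GNFA

variable {σ Q : Type*}

/-- `I A u β` means `β ∈ I_u`: `β` is obtained by concatenating the edge labels
along some path from `s` to `u` (in particular `ε ∈ I_s`). -/
inductive I (A : GNFA σ Q) : Q → List σ → Prop
  | base : I A A.s []
  | step {u v : Q} {α ρ : List σ} : I A u α → (u, v, ρ) ∈ A.E → I A v (α ++ ρ)

/-- Reachability along edges. -/
def Reach (A : GNFA σ Q) : Q → Q → Prop :=
  Relation.ReflTransGen (fun x y => ∃ ρ, (x, y, ρ) ∈ A.E)

/-- Every state is reachable from the initial state and is co-reachable
(final or allows reaching a final state). -/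
def Standard (A : GNFA σ Q) : Prop :=
  (∀ u, A.Reach A.s u) ∧ ∀ u, ∃ f ∈ A.F, A.Reach u f

/-- An ε-walk from `u` to `v`: a (possibly empty) sequence of ε-labeled edges. -/
def EpsWalk (A : GNFA σ Q) : Q → Q → Prop :=
  Relation.ReflTransGen (fun x y => (x, y, ([] : List σ)) ∈ A.E)

/-- An `r`-GNFA: all edge labels have length at most `r`. -/
def Bounded (A : GNFA σ Q) (r : ℕ) : Prop := ∀ e ∈ A.E, e.2.2.length ≤ r

/-- A GNFA without ε-transitions: every edge label is nonempty. -/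
def NoEps (A : GNFA σ Q) : Prop := ∀ e ∈ A.E, e.2.2 ≠ []

/-- `λ(u)`: the set of strings labeling some edge entering `u`. -/
def lab (A : GNFA σ Q) (u : Q) : Set (List σ) := {ρ | ∃ u', (u', u, ρ) ∈ A.E}

/-- `G_⊣(α)`: states `u` such that some `β ∈ I_u` has `α` as a suffix. -/
def Gsuf (A : GNFA σ Q) (α : List σ) : Set Q := {u | ∃ β, I A u β ∧ α <:+ β}

/-- `G*(α)`: states reached by an edge whose label has `α` as a suffix. -/
def Gstar (A : GNFA σ Q) (α : List σ) : Set Q := {u | ∃ ρ ∈ A.lab u, α <:+ ρ}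

section Colex
variable [LinearOrder σ]

/-- The preorder `u ≼_A v`. -/
def Preceq (A : GNFA σ Q) (u v : Q) : Prop :=
  ∀ α β, I A u α → I A v β →
    ¬((I A u α ∧ I A v α) ∧ (I A u β ∧ I A v β)) → ColexLt α β

/-- `G^≺(α)`: states `u` such that every `β ∈ I_u` satisfies `β ≺ α`. -/
def Gprec (A : GNFA σ Q) (α : List σ) : Set Q := {u | ∀ β, I A u β → ColexLt β α}

/-- `G^≺_⊣(α) = G^≺(α) ∪ G_⊣(α)`. -/
def GprecSuf (A : GNFA σ Q) (α : List σ) : Set Q := A.Gprec α ∪ A.Gsuf α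

/-- The linear order on `Q` is a Wheeler order on `A` (Axioms 1–4). -/
def IsWheeler [LinearOrder Q] (A : GNFA σ Q) : Prop :=
  (∀ u v : Q, u ≤ v → A.Preceq u v) ∧
  (∀ u : Q, A.s ≤ u) ∧
  (∀ u' u v' v : Q, ∀ ρ ρ' : List σ, (u', u, ρ) ∈ A.E → (v', v, ρ') ∈ A.E →
      u < v → ¬IsStrictSuffix ρ' ρ → ColexLe ρ ρ') ∧
  (∀ u' u v' v : Q, ∀ ρ : List σ, (u', u, ρ) ∈ A.E → (v', v, ρ) ∈ A.E →
      u < v → u' ≤ v')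

end Colex

section Indexed
variable [Fintype Q] [LinearOrder Q]

/-- `out(Q[1, m], ρ)`: number of edges labeled `ρ` leaving states in `Q[1, m]`. -/
noncomputable def outC (A : GNFA σ Q) (m : ℕ) (ρ : List σ) : ℕ :=
  {e : Q × Q × List σ | e ∈ A.E ∧ rankQ e.1 ≤ m ∧ e.2.2 = ρ}.ncard

/-- `in(Q[1, m], ρ)`: number of edges labeled `ρ` entering states in `Q[1, m]`. -/
noncomputable def inC (A : GNFA σ Q) (m : ℕ) (ρ : List σ) : ℕ :=
  {e : Q × Q × List σ | e ∈ A.E ∧ rankQ e.2.1 ≤ m ∧ e.2.2 = ρ}.ncard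

/-- `A_max[i]`: the largest `j` such that there is an ε-walk from `Q[j]` to `Q[i]`. -/
noncomputable def Amax (A : GNFA σ Q) (i : ℕ) : ℕ :=
  sSup {j | ∃ u v : Q, rankQ u = i ∧ rankQ v = j ∧ A.EpsWalk v u}

/-- `A_min[i]`: the smallest `j` such that there is an ε-walk from `Q[j]` to `Q[i]`. -/
noncomputable def Amin (A : GNFA σ Q) (i : ℕ) : ℕ :=
  sInf {j | ∃ u v : Q, rankQ u = i ∧ rankQ v = j ∧ A.EpsWalk v u}

variable [LinearOrder σ]

/-- `f_k = out(Q[1, |G^≺(p(α, |α|−k))|], s(α, k))`. -/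
noncomputable def fk (A : GNFA σ Q) (α : List σ) (k : ℕ) : ℕ :=
  A.outC ((A.Gprec (pref α (α.length - k))).ncard) (suff α k)

/-- `g_k = out(Q[1, |G^≺_⊣(p(α, |α|−k))|], s(α, k))`. -/
noncomputable def gk (A : GNFA σ Q) (α : List σ) (k : ℕ) : ℕ :=
  A.outC ((A.GprecSuf (pref α (α.length - k))).ncard) (suff α k)

/-- The property defining `j*` in Lemmas 2 and 4 (largest `j` satisfying it):
(i) `in(Q[1, j], s(α, k)) ≤ f_k` for every `0 < k < min{r+1, |α|}`; and
(ii) `ρ ≺ α` for every `ρ ∈ Σ^k ∩ λ(Q[h])`, every `1 ≤ h ≤ j`, every `0 < k < r+1`. -/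
def Jcond (A : GNFA σ Q) (r : ℕ) (α : List σ) (j : ℕ) : Prop :=
  (∀ k, 0 < k → k < min (r + 1) α.length → A.inC j (suff α k) ≤ A.fk α k) ∧
  (∀ k, 0 < k → k < r + 1 → ∀ h, 1 ≤ h → h ≤ j → ∀ u : Q, rankQ u = h →
      ∀ ρ : List σ, ρ.length = k → ρ ∈ A.lab u → ColexLt ρ α)

/-- The property defining `i*` (largest `i ≤ |Q|` satisfying it):
if `i ≥ 1` then `Q[i] ∈ G*(α)`. -/
def Icond (A : GNFA σ Q) (α : List σ) (i : ℕ) : Prop :=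
  1 ≤ i → ∃ u : Q, rankQ u = i ∧ u ∈ A.Gstar α

/-- The property defining `j°` (smallest `j ≤ |Q|` satisfying it):
`in(Q[1, j], s(α, k)) ≥ g_k` for every `0 < k < min{r+1, |α|}` with `g_k > f_k`. -/
def Jcond2 (A : GNFA σ Q) (r : ℕ) (α : List σ) (j : ℕ) : Prop :=
  ∀ k, 0 < k → k < min (r + 1) α.length → A.fk α k < A.gk α k →
    A.gk α k ≤ A.inC j (suff α k)

end Indexed

end GNFA
-- auxiliary lemmas, to be appended before the theorem
section ColexAux
variable {σ : Type*} [LinearOrder σ]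

lemma lexLt_trans' {a b c : List σ} (h1 : List.Lex (· < ·) a b)
    (h2 : List.Lex (· < ·) b c) : List.Lex (· < ·) a c := by
  induction h2 generalizing a with
  | nil => cases h1
  | @cons x l₁ l₂ h ih =>
      cases h1 with
      | nil => exact List.Lex.nil
      | cons h' => exact List.Lex.cons (ih h')
      | rel h' => exact List.Lex.rel h'
  | @rel x l₁ y l₂ hxy =>
      cases h1 with
      | nil => exact List.Lex.nil
      | cons h' => exact List.Lex.rel hxy
      | rel h' => exact List.Lex.rel (lt_trans h' hxy)

lemma lexLt_asymm' {a b : List σ} (h1 : List.Lex (· < ·) a b)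
    (h2 : List.Lex (· < ·) b a) : False := by
  induction h1 with
  | nil => cases h2
  | cons h ih =>
      cases h2 with
      | cons h' => exact ih h'
      | rel h' => exact lt_irrefl _ h'
  | rel h =>
      cases h2 with
      | cons h' => exact lt_irrefl _ h
      | rel h' => exact lt_asymm h h' 

lemma lex_extend' {a g d : List σ} (h : List.Lex (· < ·) a g)
    (hnp : ¬ a <+: g) (hp : a <+: d) : List.Lex (· < ·) d g := by
  induction h generalizing d with
  | nil => exact absurd (List.nil_prefix) hnp
  | @cons x l₁ l₂ hl ih =>
      obtain ⟨t, rfl⟩ := hp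
      refine List.Lex.cons (ih ?_ ⟨t, rfl⟩)
      exact fun hpre => hnp (List.cons_prefix_cons.mpr ⟨rfl, hpre⟩)
  | @rel x l₁ y l₂ hxy =>
      obtain ⟨t, rfl⟩ := hp
      exact List.Lex.rel hxy

lemma lex_shrink' {b g : List σ} (h : List.Lex (· < ·) b g) :
    ∀ a, a <+: g → ¬ a <+: b → List.Lex (· < ·) b a := by
  induction h with
  | @nil y l =>
      intro a hp hnb
      match a with
      | [] => exact absurd List.nil_prefix hnb
      | z :: t => exact List.Lex.nil
  | @rel x l₁ y l₂ hxy =>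
      intro a hp hnb
      match a with
      | [] => exact absurd List.nil_prefix hnb
      | z :: t =>
          obtain ⟨rfl, -⟩ := List.cons_prefix_cons.mp hp
          exact List.Lex.rel hxy
  | @cons x l₁ l₂ hl ih =>
      intro a hp hnb
      match a with
      | [] => exact absurd List.nil_prefix hnb
      | z :: t =>
          obtain ⟨rfl, ht⟩ := List.cons_prefix_cons.mp hp
          refine List.Lex.cons (ih t ht ?_)
          exact fun h' => hnb (List.cons_prefix_cons.mpr ⟨rfl, h'⟩)

lemma colexLt_trans {a b c : List σ} (h1 : ColexLt a b) (h2 : ColexLt b c) :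
    ColexLt a c := lexLt_trans' h1 h2

lemma colexLt_asymm {a b : List σ} (h1 : ColexLt a b) (h2 : ColexLt b a) : False :=
  lexLt_asymm' h1 h2

lemma lexLt_total' : ∀ (a b : List σ),
    a = b ∨ List.Lex (· < ·) a b ∨ List.Lex (· < ·) b a
  | [], [] => Or.inl rfl
  | [], _ :: _ => Or.inr (Or.inl List.Lex.nil)
  | _ :: _, [] => Or.inr (Or.inr List.Lex.nil)
  | x :: s, y :: t => by
      rcases lt_trichotomy x y with h | rfl | h
      · exact Or.inr (Or.inl (List.Lex.rel h))
      · rcases lexLt_total' s t with rfl | h | h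
        · exact Or.inl rfl
        · exact Or.inr (Or.inl (List.Lex.cons h))
        · exact Or.inr (Or.inr (List.Lex.cons h))
      · exact Or.inr (Or.inr (List.Lex.rel h))

lemma colexLt_total {a b : List σ} (h : a ≠ b) : ColexLt a b ∨ ColexLt b a := by
  rcases lexLt_total' a.reverse b.reverse with h' | h' | h'
  · exact absurd (List.reverse_injective h') h
  · exact Or.inl h'
  · exact Or.inr h'

/-- Fact F: if `α ≺ γ`, `α` is not a suffix of `γ`, and `α` is a suffix of `δ`,
then `δ ≺ γ`. -/
lemma colexLt_extend {a g d : List σ} (h : ColexLt a g) (hna : ¬ a <:+ g)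
    (had : a <:+ d) : ColexLt d g :=
  lex_extend' h (fun hp => hna (List.reverse_prefix.mp hp))
    (List.reverse_prefix.mpr had)

/-- Fact F': if `β ≺ δ`, `α` is a suffix of `δ`, and `α` is not a suffix of `β`,
then `β ≺ α`. -/
lemma colexLt_shrink {b d a : List σ} (h : ColexLt b d) (hs : a <:+ d)
    (hnb : ¬ a <:+ b) : ColexLt b a :=
  lex_shrink' h a.reverse (List.reverse_prefix.mpr hs)
    (fun hp => hnb (List.reverse_prefix.mp hp))

end ColexAux

namespace GNFA

section Aux
variable {σ Q : Type*} [LinearOrder σ]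

lemma exists_I_of_reach {A : GNFA σ Q} {u : Q} (h : A.Reach A.s u) :
    ∃ β, A.I u β := by
  induction h with
  | refl => exact ⟨[], I.base⟩
  | tail hr hstep ih =>
      obtain ⟨β, hβ⟩ := ih
      obtain ⟨ρ, he⟩ := hstep
      exact ⟨β ++ ρ, hβ.step he⟩

lemma I_nonempty (A : GNFA σ Q) (hA : A.Standard) (u : Q) : ∃ β, A.I u β :=
  exists_I_of_reach (hA.1 u)

lemma gstar_subset_gsuf (A : GNFA σ Q) (hA : A.Standard) (α : List σ) :
    A.Gstar α ⊆ A.Gsuf α := by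
  rintro u ⟨ρ, ⟨u', he⟩, hs⟩
  obtain ⟨β, hβ⟩ := I_nonempty A hA u'
  exact ⟨β ++ ρ, hβ.step he, hs.trans (List.suffix_append β ρ)⟩

variable [LinearOrder Q]

lemma gprec_lower {A : GNFA σ Q} (hA : A.Standard) (hW : A.IsWheeler) {α : List σ}
    {u v : Q} (huv : u ≤ v) (hv : v ∈ A.Gprec α) : u ∈ A.Gprec α := by
  intro β hβ
  obtain ⟨δ, hδ⟩ := I_nonempty A hA v
  by_cases hcase : (A.I u β ∧ A.I v β) ∧ (A.I u δ ∧ A.I v δ)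
  · exact hv β hcase.1.2
  · exact colexLt_trans (hW.1 u v huv β δ hβ hδ hcase) (hv δ hδ)

lemma gprecsuf_lower {A : GNFA σ Q} (hA : A.Standard) (hW : A.IsWheeler)
    {α : List σ} {u v : Q} (huv : u ≤ v) (hv : v ∈ A.GprecSuf α) :
    u ∈ A.GprecSuf α := by
  by_cases hu : u ∈ A.Gsuf α
  · exact Or.inr hu
  rcases hv with hv | hv
  · exact Or.inl (gprec_lower hA hW huv hv)
  · obtain ⟨δ, hδ, hsuf⟩ := hv
    left
    intro β hβ
    have hβa : ¬ α <:+ β := fun h => hu ⟨β, hβ, h⟩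
    by_cases hcase : (A.I u β ∧ A.I v β) ∧ (A.I u δ ∧ A.I v δ)
    · exact absurd ⟨δ, hcase.2.1, hsuf⟩ hu
    · exact colexLt_shrink (hW.1 u v huv β δ hβ hδ hcase) hsuf hβa

/-- The key step: if there exists a "witness" edge labeled `ρ` leaving
`G^≺_⊣(p) \ G^≺(p)`, then every edge labeled `ρ` leaving `G^≺_⊣(p)` enters
`G^≺_⊣(p ++ ρ)`. -/
lemma step_into {A : GNFA σ Q} (hA : A.Standard) (hW : A.IsWheeler) {p ρ : List σ}
    (hwit : ∃ e ∈ A.E, e.1 ∈ A.GprecSuf p ∧ e.1 ∉ A.Gprec p ∧ e.2.2 = ρ)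
    {u v : Q} (he : (u, v, ρ) ∈ A.E) (hu : u ∈ A.GprecSuf p) :
    v ∈ A.GprecSuf (p ++ ρ) := by
  by_cases husuf : u ∈ A.Gsuf p
  · obtain ⟨β, hβ, t, rfl⟩ := husuf
    exact Or.inr ⟨(t ++ p) ++ ρ, hβ.step he, ⟨t, (List.append_assoc t p ρ).symm⟩⟩
  have hup : u ∈ A.Gprec p := hu.resolve_right husuf
  by_contra hv
  have hvsuf : v ∉ A.Gsuf (p ++ ρ) := fun h => hv (Or.inr h)
  have hvprec : v ∉ A.Gprec (p ++ ρ) := fun h => hv (Or.inl h)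
  obtain ⟨γ, hγ, hγα⟩ : ∃ γ, A.I v γ ∧ ¬ ColexLt γ (p ++ ρ) := by
    by_contra h
    push_neg at h
    exact hvprec h
  obtain ⟨e, heE, heps, hepc, herho⟩ := hwit
  have he1 : (e.1, e.2.1, ρ) ∈ A.E := by
    rw [← herho]
    exact heE
  have hu1s : e.1 ∈ A.Gsuf p := heps.resolve_left hepc
  obtain ⟨β₁, hβ₁, hs₁⟩ := hu1s
  have hδ : A.I e.2.1 (β₁ ++ ρ) := hβ₁.step he1
  have hδα : (p ++ ρ) <:+ (β₁ ++ ρ) := by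
    obtain ⟨t, rfl⟩ := hs₁
    exact ⟨t, (List.append_assoc t p ρ).symm⟩
  have hnsuf : ¬ (p ++ ρ) <:+ γ := fun h => hvsuf ⟨γ, hγ, h⟩
  have hαγ : ColexLt (p ++ ρ) γ := by
    have hne : (p ++ ρ) ≠ γ := fun h => hnsuf (h ▸ List.suffix_refl _)
    rcases colexLt_total hne with h | h
    · exact h
    · exact absurd h hγα
  have hv1v : e.2.1 < v := by
    rcases lt_trichotomy e.2.1 v with h | h | h
    · exact h
    · exact absurd ⟨_, h ▸ hδ, hδα⟩ hvsuf
    · exfalso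
      have hcase : ¬ ((A.I v γ ∧ A.I e.2.1 γ) ∧
          (A.I v (β₁ ++ ρ) ∧ A.I e.2.1 (β₁ ++ ρ))) :=
        fun hc => hvsuf ⟨_, hc.2.1, hδα⟩
      have h1 : ColexLt γ (β₁ ++ ρ) := hW.1 v e.2.1 h.le γ (β₁ ++ ρ) hγ hδ hcase
      have h2 : ColexLt (β₁ ++ ρ) γ := colexLt_extend hαγ hnsuf hδα
      exact colexLt_asymm h1 h2
  have hle : e.1 ≤ u := hW.2.2.2 e.1 e.2.1 u v ρ he1 he hv1v
  exact hepc (gprec_lower hA hW hle hup)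

variable [Fintype Q]

lemma rankQ_eq (u : Q) : rankQ u = {v : Q | v < u}.ncard + 1 := by
  have h : {v : Q | v ≤ u} = insert u {v : Q | v < u} := by
    ext v
    simp [le_iff_lt_or_eq, or_comm]
  rw [rankQ, h, Set.ncard_insert_of_notMem (by simp) (Set.toFinite _)]

lemma rank_le_ncard_of_mem {S : Set Q} (hS : ∀ ⦃u v : Q⦄, u ≤ v → v ∈ S → u ∈ S)
    {u : Q} (hu : u ∈ S) : rankQ u ≤ S.ncard :=
  Set.ncard_le_ncard (fun v hv => hS hv hu) (Set.toFinite S)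

lemma mem_of_rank_le_ncard {S : Set Q} (hS : ∀ ⦃u v : Q⦄, u ≤ v → v ∈ S → u ∈ S)
    {u : Q} (h : rankQ u ≤ S.ncard) : u ∈ S := by
  by_contra hu
  have hsub : S ⊆ {v : Q | v < u} := by
    intro v hv
    by_contra h'
    exact hu (hS (not_lt.mp h') hv)
  have h2 := Set.ncard_le_ncard hsub (Set.toFinite _)
  rw [rankQ_eq] at h
  omega

end Aux

end GNFA

/-- Let `A` be a Wheeler `r`-GNFA with Wheeler order `≤` and
`α ≠ ε`. With `i*`, `j°` and `h* = max{|G^≺(α)|, i*, j°}` as in the context,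
`|G^≺_⊣(α)| ≥ h*`. -/
theorem gprecsuf_card_ge_hstar {σ Q : Type*} [Fintype σ] [LinearOrder σ]
    [Fintype Q] [LinearOrder Q] (A : GNFA σ Q)
    (hA : A.Standard) (hW : A.IsWheeler) (r : ℕ) (hr : A.Bounded r)
    (α : List σ) (hα : α ≠ [])
    (istar : ℕ) (hi_le : istar ≤ Fintype.card Q) (hi : A.Icond α istar)
    (hi_max : ∀ i ≤ Fintype.card Q, A.Icond α i → i ≤ istar)
    (jo : ℕ) (hjo_le : jo ≤ Fintype.card Q) (hjo : A.Jcond2 r α jo)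
    (hjo_min : ∀ j ≤ Fintype.card Q, A.Jcond2 r α j → jo ≤ j) :
    max (max (A.Gprec α).ncard istar) jo ≤ (A.GprecSuf α).ncard := by
  classical
  have hSl : ∀ ⦃u v : Q⦄, u ≤ v → v ∈ A.GprecSuf α → u ∈ A.GprecSuf α :=
    fun u v h hv => GNFA.gprecsuf_lower hA hW h hv
  refine max_le (max_le ?_ ?_) ?_
  · exact Set.ncard_le_ncard Set.subset_union_left (Set.toFinite _)
  · rcases Nat.eq_zero_or_pos istar with h | h
    · simp [h]
    obtain ⟨u, hrank, hu⟩ := hi h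
    have hmem : u ∈ A.GprecSuf α := Or.inr (GNFA.gstar_subset_gsuf A hA α hu)
    exact hrank ▸ GNFA.rank_le_ncard_of_mem hSl hmem
  · apply hjo_min
    · have h1 : (A.GprecSuf α).ncard ≤ (Set.univ : Set Q).ncard :=
        Set.ncard_le_ncard (Set.subset_univ _) (Set.toFinite _)
      rwa [Set.ncard_univ, Nat.card_eq_fintype_card] at h1
    intro k hk0 hk hfg
    have hkα : k < α.length := lt_of_lt_of_le hk (min_le_right _ _)
    have hpρ : pref α (α.length - k) ++ suff α k = α := List.take_append_drop _ _
    have hGl : ∀ ⦃u v : Q⦄, u ≤ v → v ∈ A.Gprec (pref α (α.length - k)) →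
        u ∈ A.Gprec (pref α (α.length - k)) :=
      fun u v h hv => GNFA.gprec_lower hA hW h hv
    have hGSl : ∀ ⦃u v : Q⦄, u ≤ v → v ∈ A.GprecSuf (pref α (α.length - k)) →
        u ∈ A.GprecSuf (pref α (α.length - k)) :=
      fun u v h hv => GNFA.gprecsuf_lower hA hW h hv
    have hwit : ∃ e ∈ A.E, e.1 ∈ A.GprecSuf (pref α (α.length - k)) ∧
        e.1 ∉ A.Gprec (pref α (α.length - k)) ∧ e.2.2 = suff α k := by
      by_contra hw
      push_neg at hw
      have hsub : {e : Q × Q × List σ | e ∈ A.E ∧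
            rankQ e.1 ≤ (A.GprecSuf (pref α (α.length - k))).ncard ∧ e.2.2 = suff α k} ⊆
          {e : Q × Q × List σ | e ∈ A.E ∧
            rankQ e.1 ≤ (A.Gprec (pref α (α.length - k))).ncard ∧ e.2.2 = suff α k} := by
        rintro e ⟨heE, hr, hl⟩
        have hmem := GNFA.mem_of_rank_le_ncard hGSl hr
        have hgp : e.1 ∈ A.Gprec (pref α (α.length - k)) := by
          by_contra h'
          exact hw e heE hmem h' hl
        exact ⟨heE, GNFA.rank_le_ncard_of_mem hGl hgp, hl⟩
      have hle := Set.ncard_le_ncard hsub ((A.E.finite_toSet).subset (fun e he => he.1))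
      unfold GNFA.fk GNFA.gk GNFA.outC at hfg
      omega
    unfold GNFA.gk GNFA.outC GNFA.inC
    refine Set.ncard_le_ncard ?_ ((A.E.finite_toSet).subset (fun e he => he.1))
    rintro ⟨u, v, l⟩ ⟨heE, hr, hl⟩
    have hl' : l = suff α k := hl
    subst hl'
    have hu : u ∈ A.GprecSuf (pref α (α.length - k)) := GNFA.mem_of_rank_le_ncard hGSl hr
    have hv2 : v ∈ A.GprecSuf α := hpρ ▸ GNFA.step_into hA hW hwit heE hu
    exact ⟨heE, GNFA.rank_le_ncard_of_mem hSl hv2, rfl⟩
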